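/- With D_j(z) ∈ {0,1} satisfying monotonicity D_j(1) ≥ D_j(0), and for each j and measure m ∈ {φ, ψ} average potential outcomes Ȳ_j(d, m) for d ∈ {0,1}: define for z ∈ {0,1} the intent-to-treat average A(z, m) = (1/n)·Σ_j [D_j(z)·Ȳ_j(1,m) + (1−D_j(z))·Ȳ_j(0,m)]. Then [A(1,φ) − A(1,ψ)] − [A(0,φ) − A(0,ψ)] = (C/n)·[LPT(1) − LPT(0)], where C is the number of compliers and LPT(d) = (1/C)·Σ_{compliers} [Ȳ_j(d,φ) − Ȳ_j(d,ψ)]. Consequently, if C > 0, dividing by ET = (1/n)·Σ_j (D_j(1) − D_j(0)) = C/n identifies the difference of complier local peer treatment effects LPT(1) − LPT(0). -/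

import Mathlib

open Finset

/-- block-level Theorem 2: the difference of peer ITT contrasts equals
(C/n)·[LPT(1) − LPT(0)], and dividing by ET = C/n identifies LPT(1) − LPT(0).
`Yφ1 j` = Ȳ_j(1,φ), etc. -/
theorem stmt_3 (n : ℕ) (hn : 0 < n) (D1 D0 Yφ1 Yφ0 Yψ1 Yψ0 : Fin n → ℝ)
    (hD1 : ∀ j, D1 j = 0 ∨ D1 j = 1) (hD0 : ∀ j, D0 j = 0 ∨ D0 j = 1)
    (hmono : ∀ j, D0 j ≤ D1 j)
    (C : ℕ) (hC : C = (univ.filter (fun j => D1 j = 1 ∧ D0 j = 0)).card)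
    (hCpos : 0 < C)
    (A1φ A1ψ A0φ A0ψ LPT1 LPT0 : ℝ)
    (hA1φ : A1φ = (1 / (n : ℝ)) * ∑ j, (D1 j * Yφ1 j + (1 - D1 j) * Yφ0 j))
    (hA1ψ : A1ψ = (1 / (n : ℝ)) * ∑ j, (D1 j * Yψ1 j + (1 - D1 j) * Yψ0 j))
    (hA0φ : A0φ = (1 / (n : ℝ)) * ∑ j, (D0 j * Yφ1 j + (1 - D0 j) * Yφ0 j))
    (hA0ψ : A0ψ = (1 / (n : ℝ)) * ∑ j, (D0 j * Yψ1 j + (1 - D0 j) * Yψ0 j))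
    (hLPT1 : LPT1 = (1 / (C : ℝ)) *
        ∑ j ∈ univ.filter (fun j => D1 j = 1 ∧ D0 j = 0), (Yφ1 j - Yψ1 j))
    (hLPT0 : LPT0 = (1 / (C : ℝ)) *
        ∑ j ∈ univ.filter (fun j => D1 j = 1 ∧ D0 j = 0), (Yφ0 j - Yψ0 j)) :
    (A1φ - A1ψ) - (A0φ - A0ψ) = ((C : ℝ) / n) * (LPT1 - LPT0) ∧
    ((A1φ - A1ψ) - (A0φ - A0ψ)) / ((C : ℝ) / n) = LPT1 - LPT0 := by
  have hCn : (C : ℝ) ≠ 0 := Nat.cast_ne_zero.2 hCpos.ne'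
  have hnn : (n : ℝ) ≠ 0 := Nat.cast_ne_zero.2 hn.ne'
  set S := univ.filter (fun j => D1 j = 1 ∧ D0 j = 0) with hS
  have key : ∀ f : Fin n → ℝ,
      ∑ j, (D1 j - D0 j) * f j = ∑ j ∈ S, f j := by
    intro f
    rw [← Finset.sum_filter_add_sum_filter_not univ (fun j => D1 j = 1 ∧ D0 j = 0)
      (fun j => (D1 j - D0 j) * f j)]
    have h1 : ∑ j ∈ S, (D1 j - D0 j) * f j = ∑ j ∈ S, f j := by
      apply Finset.sum_congr rfl
      intro j hj
      simp only [hS, Finset.mem_filter] at hj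
      rw [hj.2.1, hj.2.2]; ring
    have h2 : ∑ j ∈ univ.filter (fun j => ¬(D1 j = 1 ∧ D0 j = 0)),
        (D1 j - D0 j) * f j = 0 := by
      apply Finset.sum_eq_zero
      intro j hj
      simp only [Finset.mem_filter] at hj
      rcases hD1 j with h | h <;> rcases hD0 j with h' | h'
      · rw [h, h']; ring
      · exact absurd (h ▸ h' ▸ hmono j) (by norm_num)
      · exact absurd ⟨h, h'⟩ hj.2
      · rw [h, h']; ring
    rw [h1, h2, add_zero]
  have main : (A1φ - A1ψ) - (A0φ - A0ψ) = ((C : ℝ) / n) * (LPT1 - LPT0) := by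
    have hk := key (fun j => (Yφ1 j - Yψ1 j) - (Yφ0 j - Yψ0 j))
    have hsum : (∑ j, (D1 j * Yφ1 j + (1 - D1 j) * Yφ0 j))
        - (∑ j, (D1 j * Yψ1 j + (1 - D1 j) * Yψ0 j))
        - ((∑ j, (D0 j * Yφ1 j + (1 - D0 j) * Yφ0 j))
          - (∑ j, (D0 j * Yψ1 j + (1 - D0 j) * Yψ0 j)))
        = ∑ j ∈ S, ((Yφ1 j - Yψ1 j) - (Yφ0 j - Yψ0 j)) := by
      rw [← hk, ← Finset.sum_sub_distrib, ← Finset.sum_sub_distrib, ← Finset.sum_sub_distrib]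
      exact Finset.sum_congr rfl (fun j _ => by ring)
    rw [hA1φ, hA1ψ, hA0φ, hA0ψ, hLPT1, hLPT0,
      show ∀ a b c d : ℝ, (1/(n:ℝ))*a - (1/(n:ℝ))*b - ((1/(n:ℝ))*c - (1/(n:ℝ))*d)
        = (1/(n:ℝ))*(a - b - (c - d)) from fun a b c d => by ring, hsum,
      ← mul_sub, ← Finset.sum_sub_distrib]
    field_simp
  refine ⟨main, ?_⟩
  rw [main]; exact mul_div_cancel_left₀ _ (by positivity)
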